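/- Let (X, f) be a dynamical system on a uniform space with the topological shadowing property. If f is totally transitive, then f is weakly mixing. -/

import Mathlib

open Set Filter Function

variable {X : Type*}

/-- An `E`-chain of length `n` from `x` to `y` for the map `f`. -/
def ChainFrom (f : X → X) (E : Set (X × X)) (n : ℕ) (x y : X) : Prop :=
  ∃ c : ℕ → X, c 0 = x ∧ c n = y ∧ ∀ i < n, (f (c i), c (i + 1)) ∈ E

/-- Topological chain transitivity on a uniform space. -/
def ChainTransitive [UniformSpace X] (f : X → X) : Prop :=
  ∀ E ∈ uniformity X, ∀ x y : X, ∃ n ≥ 1, ChainFrom f E n x y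

/-- Lengths of `E`-chains from `x` to itself (loops). -/
def LoopLengths (f : X → X) (E : Set (X × X)) (x : X) : Set ℕ :=
  {n | 1 ≤ n ∧ ChainFrom f E n x x}

/-- `g` is the greatest common divisor of the set `S` of naturals. -/
def IsGcdOfSet (g : ℕ) (S : Set ℕ) : Prop :=
  (∀ n ∈ S, g ∣ n) ∧ ∀ d : ℕ, (∀ n ∈ S, d ∣ n) → d ∣ g

/-- The relation `x ∼_E y`: some `E`-chain from `x` to `y` has length a multiple of `ι`. -/
def SimE (f : X → X) (E : Set (X × X)) (ι : ℕ) (x y : X) : Prop :=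
  ∃ n, ι ∣ n ∧ ChainFrom f E n x y

/-- Topological shadowing property on a uniform space. -/
def Shadowing [UniformSpace X] (f : X → X) : Prop :=
  ∀ E ∈ uniformity X, ∃ D ∈ uniformity X,
    ∀ x : ℕ → X, (∀ i, (f (x i), x (i + 1)) ∈ D) →
      ∃ y, ∀ n, (f^[n] y, x n) ∈ E

/-- Topological chain mixing on a uniform space. -/
def ChainMixing [UniformSpace X] (f : X → X) : Prop :=
  ∀ D ∈ uniformity X, ∀ x y : X, ∃ N ≥ 1, ∀ n ≥ N, ChainFrom f D n x y

/-- A non-wandering point of `f`. -/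
def NonWandering [TopologicalSpace X] (f : X → X) (x : X) : Prop :=
  ∀ V ∈ nhds x, ∃ n ≥ 1, (V ∩ f^[n] ⁻¹' V).Nonempty

/-- Topological transitivity. -/
def TopTransitive [TopologicalSpace X] (f : X → X) : Prop :=
  ∀ U V : Set X, IsOpen U → IsOpen V → U.Nonempty → V.Nonempty →
    ∃ n : ℕ, (U ∩ f^[n] ⁻¹' V).Nonempty

/-- A syndetic set of natural numbers (bounded gaps). -/
def Syndetic (A : Set ℕ) : Prop :=
  ∃ k : ℕ, ∀ n : ℕ, ∃ m, n ≤ m ∧ m ≤ n + k ∧ m ∈ A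

/-- A minimal (almost periodic) point of `f`. -/
def MinimalPt [TopologicalSpace X] (f : X → X) (y : X) : Prop :=
  ∀ V ∈ nhds y, Syndetic {n : ℕ | f^[n] y ∈ V}

/-- Equicontinuity of a dynamical system on a uniform space. -/
def Equicont [UniformSpace X] (f : X → X) : Prop :=
  ∀ E ∈ uniformity X, ∃ D ∈ uniformity X, ∀ n : ℕ, ∀ p ∈ D, (f^[n] p.1, f^[n] p.2) ∈ E

lemma chainFrom_concat {f : X → X} {E : Set (X × X)} {m n : ℕ} {x y z : X}
    (h1 : ChainFrom f E m x y) (h2 : ChainFrom f E n y z) :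
    ChainFrom f E (m + n) x z := by
  obtain ⟨c, hc0, hcm, hcs⟩ := h1
  obtain ⟨d, hd0, hdn, hds⟩ := h2
  refine ⟨fun k => if k ≤ m then c k else d (k - m), by simp [hc0], ?_, ?_⟩
  · by_cases h : n = 0
    · subst h
      simp only [Nat.add_zero, le_refl, if_pos]
      rw [hcm, ← hd0, hdn]
    · have h' : ¬ (m + n ≤ m) := by omega
      simp only [h', if_neg, Nat.add_sub_cancel_left]
      simpa using hdn
  · intro i hi
    by_cases h : i + 1 ≤ m
    · have h1' : i ≤ m := by omega
      simp only [if_pos h, if_pos h1']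
      exact hcs i (by omega)
    · have hvi : (if i ≤ m then c i else d (i - m)) = d (i - m) := by
        by_cases h2 : i ≤ m
        · have him : i = m := by omega
          subst him
          simp [hcm, ← hd0]
        · simp [h2]
      simp only [hvi, if_neg h]
      have : i + 1 - m = (i - m) + 1 := by omega
      rw [this]
      exact hds (i - m) (by omega)

lemma chainFrom_loop_pow {f : X → X} {E : Set (X × X)} {ℓ : ℕ} {u : X}
    (h : ChainFrom f E ℓ u u) : ∀ α : ℕ, ChainFrom f E (α * ℓ) u u := by
  intro α
  induction α with
  | zero => exact ⟨fun _ => u, rfl, rfl, by simp⟩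
  | succ α ih =>
      have := chainFrom_concat ih h
      simpa [Nat.succ_mul] using this

lemma coprime_rep {a b : ℕ} (hcop : Nat.Coprime a b) (hb : 1 ≤ b) {n : ℕ}
    (hn : a * b ≤ n) : ∃ α β : ℕ, n = α * a + β * b := by
  haveI : NeZero b := ⟨by omega⟩
  set u := ZMod.unitOfCoprime a hcop with hu
  set α := ((n : ZMod b) * (↑u⁻¹ : ZMod b)).val with hα
  have hαlt : α < b := ZMod.val_lt _
  have hcast : ((α * a : ℕ) : ZMod b) = (n : ZMod b) := by
    push_cast
    rw [hα, ZMod.natCast_val, ZMod.cast_id]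
    have ha : (a : ZMod b) = ↑u := (ZMod.coe_unitOfCoprime a hcop).symm
    rw [ha, mul_assoc, Units.inv_mul, mul_one]
  have hmod : α * a ≡ n [MOD b] := (ZMod.natCast_eq_natCast_iff _ _ _).mp hcast
  have hle : α * a ≤ n := by
    calc α * a ≤ b * a := Nat.mul_le_mul_right a (le_of_lt hαlt)
    _ = a * b := Nat.mul_comm b a
    _ ≤ n := hn
  obtain ⟨β, hβ⟩ := (Nat.modEq_iff_dvd' hle).mp hmod
  exact ⟨α, β, by rw [Nat.mul_comm β b]; omega⟩

lemma exists_chain_mod [UniformSpace X] {f : X → X}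
    (htt : ∀ n : ℕ, 1 ≤ n → TopTransitive (f^[n]))
    {D : Set (X × X)} (hD : D ∈ uniformity X) {k : ℕ} (hk : 1 ≤ k) (x y : X) :
    ∃ m, ChainFrom f D (k * m + 1) x y := by
  obtain ⟨t, ht, hto, hts, htc⟩ := comp_open_symm_mem_uniformity_sets hD
  have htsub : t ⊆ D := fun p hp => htc ⟨p.1, refl_mem_uniformity ht, hp⟩
  obtain ⟨m, z, hzU, hzV⟩ := htt k hk (UniformSpace.ball (f x) t) (UniformSpace.ball y t)
      (UniformSpace.isOpen_ball _ hto) (UniformSpace.isOpen_ball _ hto)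
      ⟨f x, refl_mem_uniformity ht⟩ ⟨y, refl_mem_uniformity ht⟩
  have hzV' : (y, f^[k * m] z) ∈ t := by
    have : (f^[k])^[m] z ∈ UniformSpace.ball y t := hzV
    rwa [← Function.iterate_mul] at this
  have hzU' : (f x, z) ∈ t := hzU
  rcases Nat.eq_zero_or_pos m with hm | hm
  · subst hm
    refine ⟨0, fun i => if i = 0 then x else y, by simp, by simp, ?_⟩
    intro i hi
    have hi0 : i = 0 := by omega
    subst hi0
    simp only [if_pos rfl, if_neg (by omega : (1 : ℕ) ≠ 0)]
    refine htc ⟨z, hzU', ?_⟩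
    have : (y, z) ∈ t := by simpa using hzV'
    exact hts.symm _ _ this
  · have hkm : 1 ≤ k * m := Nat.one_le_iff_ne_zero.mpr (by positivity)
    refine ⟨m, fun i => if i = 0 then x else if i ≤ k * m then f^[i - 1] z else y,
      by simp, ?_, ?_⟩
    · simp only [if_neg (by omega : k * m + 1 ≠ 0), if_neg (by omega : ¬ k * m + 1 ≤ k * m)]
    · intro i hi
      rcases Nat.eq_zero_or_pos i with h0 | h0
      · subst h0
        simp only [if_pos rfl, if_neg (by omega : (1:ℕ) ≠ 0), if_pos hkm]
        simpa using htsub hzU'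
      · rcases Nat.lt_or_ge i (k * m) with hlt | hge
        · simp only [if_neg (by omega : i ≠ 0), if_pos (by omega : i ≤ k * m),
            if_neg (by omega : i + 1 ≠ 0), if_pos (by omega : i + 1 ≤ k * m)]
          have : f (f^[i - 1] z) = f^[i + 1 - 1] z := by
            rw [← Function.iterate_succ_apply' f (i - 1) z]
            congr 1
            omega
          rw [this]
          exact refl_mem_uniformity hD
        · have hieq : i = k * m := by omega
          subst hieq
          simp only [if_neg (by omega : k * m ≠ 0), if_pos (le_refl (k * m)),
            if_neg (by omega : k * m + 1 ≠ 0), if_neg (by omega : ¬ k * m + 1 ≤ k * m)]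
          have : f (f^[k * m - 1] z) = f^[k * m] z := by
            rw [← Function.iterate_succ_apply' f (k * m - 1) z]
            congr 1
            omega
          rw [this]
          exact htsub (hts.symm _ _ hzV')

lemma chain_all_large [UniformSpace X] {f : X → X}
    (htt : ∀ n : ℕ, 1 ≤ n → TopTransitive (f^[n]))
    {D : Set (X × X)} (hD : D ∈ uniformity X) (u v : X) :
    ∃ N, ∀ n ≥ N, ChainFrom f D n u v := by
  obtain ⟨m₁, hA⟩ := exists_chain_mod htt hD (le_refl 1) u u
  set a := 1 * m₁ + 1 with ha
  have ha1 : 1 ≤ a := by omega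
  obtain ⟨m₂, hB⟩ := exists_chain_mod htt hD ha1 u u
  set b := a * m₂ + 1 with hbdef
  have hb1 : 1 ≤ b := by omega
  obtain ⟨m₃, hr⟩ := exists_chain_mod htt hD (le_refl 1) u v
  set r := 1 * m₃ + 1 with hrdef
  have hcop : Nat.Coprime a b := by
    have := Nat.coprime_one_right a
    simpa [hbdef, Nat.add_comm] using (Nat.Coprime.add_mul_left_right this m₂)
  refine ⟨a * b + r, ?_⟩
  intro n hn
  obtain ⟨α, β, hab⟩ := coprime_rep hcop hb1 (n := n - r) (by omega)
  have hc := chainFrom_concat (chainFrom_concat (chainFrom_loop_pow hA α)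
    (chainFrom_loop_pow hB β)) hr
  have hlen : α * a + β * b + r = n := by omega
  rwa [hlen] at hc

lemma top_mixing [UniformSpace X] {f : X → X}
    (hsh : Shadowing f)
    (htt : ∀ n : ℕ, 1 ≤ n → TopTransitive (f^[n]))
    (U V : Set X) (hU : IsOpen U) (hV : IsOpen V) (hUne : U.Nonempty) (hVne : V.Nonempty) :
    ∃ N, ∀ n ≥ N, (U ∩ f^[n] ⁻¹' V).Nonempty := by
  obtain ⟨u, hu⟩ := hUne
  obtain ⟨v, hv⟩ := hVne
  obtain ⟨EU, hEU, hEUb⟩ := isOpen_iff_ball_subset.mp hU u hu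
  obtain ⟨EV, hEV, hEVb⟩ := isOpen_iff_ball_subset.mp hV v hv
  set E0 := EU ∩ EV with hE0
  have hE0u : E0 ∈ uniformity X := inter_mem hEU hEV
  set E' := SetRel.symmetrize E0 with hE'
  have hE'u : E' ∈ uniformity X := symmetrize_mem_uniformity hE0u
  obtain ⟨D, hDu, hDsh⟩ := hsh E' hE'u
  obtain ⟨N, hN⟩ := chain_all_large htt hDu u v
  refine ⟨N, ?_⟩
  intro n hn
  obtain ⟨c, hc0, hcn, hcs⟩ := hN n hn
  set x : ℕ → X := fun k => if k ≤ n then c k else f^[k - n] v with hx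
  have hpo : ∀ i, (f (x i), x (i + 1)) ∈ D := by
    intro i
    by_cases h : i + 1 ≤ n
    · simp only [hx, if_pos h, if_pos (by omega : i ≤ n)]
      exact hcs i (by omega)
    · have hxi : x i = f^[i - n] v := by
        by_cases h2 : i ≤ n
        · have : i = n := by omega
          subst this
          simp [hx, hcn]
        · simp [hx, h2]
      have hxi1 : x (i + 1) = f^[i + 1 - n] v := by simp [hx, h]
      rw [hxi, hxi1]
      have : f (f^[i - n] v) = f^[i + 1 - n] v := by
        rw [← Function.iterate_succ_apply' f (i - n) v]
        congr 1
        omega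
      rw [this]
      exact refl_mem_uniformity hDu
  obtain ⟨y, hy⟩ := hDsh x hpo
  refine ⟨y, ?_, ?_⟩
  · have h0 : (y, x 0) ∈ E' := by simpa using hy 0
    have hx0 : x 0 = u := by simp [hx, hc0]
    rw [hx0] at h0
    have : (u, y) ∈ E0 := ((SetRel.symmetrize E0).symm h0 : (u, y) ∈ E') |>.1
    exact hEUb this.1
  · have hn' : (f^[n] y, x n) ∈ E' := hy n
    have hxn : x n = v := by simp [hx, hcn]
    rw [hxn] at hn'
    have : (v, f^[n] y) ∈ E0 := ((SetRel.symmetrize E0).symm hn' : (v, f^[n] y) ∈ E') |>.1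
    exact hEVb this.2

theorem shadowing_totally_transitive_imp_weakly_mixing [UniformSpace X]
    (f : X → X) (hf : UniformContinuous f) (hsh : Shadowing f)
    (htt : ∀ n : ℕ, 1 ≤ n → TopTransitive (f^[n])) :
    TopTransitive (Prod.map f f : X × X → X × X) := by
  intro U V hU hV hUne hVne
  obtain ⟨p, hp⟩ := hUne
  obtain ⟨q, hq⟩ := hVne
  obtain ⟨U1, U2, hU1, hU2, hp1, hp2, hUsub⟩ := isOpen_prod_iff.mp hU p.1 p.2 hp
  obtain ⟨V1, V2, hV1, hV2, hq1, hq2, hVsub⟩ := isOpen_prod_iff.mp hV q.1 q.2 hq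
  obtain ⟨N1, hN1⟩ := top_mixing hsh htt U1 V1 hU1 hV1 ⟨_, hp1⟩ ⟨_, hq1⟩
  obtain ⟨N2, hN2⟩ := top_mixing hsh htt U2 V2 hU2 hV2 ⟨_, hp2⟩ ⟨_, hq2⟩
  set n := max N1 N2
  obtain ⟨x1, hx1U, hx1V⟩ := hN1 n (le_max_left _ _)
  obtain ⟨x2, hx2U, hx2V⟩ := hN2 n (le_max_right _ _)
  refine ⟨n, (x1, x2), hUsub ⟨hx1U, hx2U⟩, ?_⟩
  have : (Prod.map f f)^[n] (x1, x2) = (f^[n] x1, f^[n] x2) := by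
    rw [Prod.map_iterate]
    rfl
  simp only [Set.mem_preimage, this]
  exact hVsub ⟨hx1V, hx2V⟩
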